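/- Let a ∈ (0,1), r ∈ (0,a), and define G(x) = x + √((4−a²+2arx−r²)/(a²−2arx+r²))·√(1−x²) for x ∈ [r/a, 1]. Then G(x) ≤ (r+2)/a for all x ∈ [r/a, 1], with equality at x₀ = (2r+a²+r²)/(2a(1+r)). -/

import Mathlib

theorem stmt_8 (a r : ℝ) (ha : 0 < r) (hra : r < a) (ha1 : a < 1)
    (G : ℝ → ℝ)
    (hG : ∀ x, G x = x + Real.sqrt ((4 - a ^ 2 + 2 * a * r * x - r ^ 2) /
        (a ^ 2 - 2 * a * r * x + r ^ 2)) * Real.sqrt (1 - x ^ 2)) :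
    (∀ x ∈ Set.Icc (r / a) 1, G x ≤ (r + 2) / a) ∧
      G ((2 * r + a ^ 2 + r ^ 2) / (2 * a * (1 + r))) = (r + 2) / a := by
  have ha0 : 0 < a := ha.trans hra
  constructor
  · rintro x ⟨hxl, hxu⟩
    have hx0 : 0 < x := lt_of_lt_of_le (div_pos ha ha0) hxl
    have hD : 0 < a ^ 2 - 2 * a * r * x + r ^ 2 := by
      nlinarith [sq_nonneg (a - r), mul_nonneg (mul_nonneg ha0.le ha.le) (sub_nonneg.2 hxu)]
    have hN : 0 ≤ 4 - a ^ 2 + 2 * a * r * x - r ^ 2 := by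
      nlinarith [mul_pos (mul_pos ha0 ha) hx0]
    have h1x : 0 ≤ 1 - x ^ 2 := by
      nlinarith [mul_nonneg (sub_nonneg.2 hxu) (by linarith : (0:ℝ) ≤ 1 + x)]
    have hrx : 0 ≤ (r + 2) / a - x := by
      have h2 : 1 < (r + 2) / a := by
        rw [lt_div_iff₀ ha0]; nlinarith
      linarith
    rw [hG]
    have hfrac : 0 ≤ (4 - a ^ 2 + 2 * a * r * x - r ^ 2) /
        (a ^ 2 - 2 * a * r * x + r ^ 2) := div_nonneg hN hD.le
    rw [← Real.sqrt_mul hfrac]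
    have h : ((r + 2) / a - x) ^ 2 = ((r + 2) - a * x) ^ 2 / a ^ 2 := by
      field_simp
    have key : (4 - a ^ 2 + 2 * a * r * x - r ^ 2) /
        (a ^ 2 - 2 * a * r * x + r ^ 2) * (1 - x ^ 2) ≤ ((r + 2) / a - x) ^ 2 := by
      rw [div_mul_eq_mul_div, div_le_iff₀ hD, h, div_mul_eq_mul_div,
        le_div_iff₀ (by positivity : (0:ℝ) < a ^ 2)]
      nlinarith [sq_nonneg (2 * a * (1 + r) * x - (2 * r + a ^ 2 + r ^ 2))]
    calc x + Real.sqrt ((4 - a ^ 2 + 2 * a * r * x - r ^ 2) /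
          (a ^ 2 - 2 * a * r * x + r ^ 2) * (1 - x ^ 2))
        ≤ x + Real.sqrt (((r + 2) / a - x) ^ 2) :=
          add_le_add (le_refl x) (Real.sqrt_le_sqrt key)
      _ = x + ((r + 2) / a - x) := by rw [Real.sqrt_sq hrx]
      _ = (r + 2) / a := by ring
  · set x := (2 * r + a ^ 2 + r ^ 2) / (2 * a * (1 + r)) with hx
    have hr1 : (0:ℝ) < 1 + r := by linarith
    have hxl : r / a ≤ x := by
      rw [hx, div_le_div_iff₀ ha0 (by positivity)]
      nlinarith [sq_nonneg (a - r)]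
    have hxu : x ≤ 1 := by
      rw [hx, div_le_one (by positivity)]
      nlinarith [sq_nonneg (a - r)]
    have hx0 : 0 < x := lt_of_lt_of_le (div_pos ha ha0) hxl
    have hD : 0 < a ^ 2 - 2 * a * r * x + r ^ 2 := by
      nlinarith [sq_nonneg (a - r), mul_nonneg (mul_nonneg ha0.le ha.le) (sub_nonneg.2 hxu)]
    have hN : 0 ≤ 4 - a ^ 2 + 2 * a * r * x - r ^ 2 := by
      nlinarith [mul_pos (mul_pos ha0 ha) hx0]
    have h1x : 0 ≤ 1 - x ^ 2 := by
      nlinarith [mul_nonneg (sub_nonneg.2 hxu) (by linarith : (0:ℝ) ≤ 1 + x)]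
    have hrx : 0 ≤ (r + 2) / a - x := by
      have h2 : 1 < (r + 2) / a := by rw [lt_div_iff₀ ha0]; nlinarith
      linarith
    have hfrac : 0 ≤ (4 - a ^ 2 + 2 * a * r * x - r ^ 2) /
        (a ^ 2 - 2 * a * r * x + r ^ 2) := div_nonneg hN hD.le
    rw [hG, ← Real.sqrt_mul hfrac]
    have hpoly : a ^ 2 * ((4 - a ^ 2 + 2 * a * r * x - r ^ 2) * (1 - x ^ 2)) =
        (a ^ 2 - 2 * a * r * x + r ^ 2) * ((r + 2) - a * x) ^ 2 := by
      rw [hx]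
      field_simp
      ring
    have hkey : (4 - a ^ 2 + 2 * a * r * x - r ^ 2) /
        (a ^ 2 - 2 * a * r * x + r ^ 2) * (1 - x ^ 2) = ((r + 2) / a - x) ^ 2 := by
      have h : ((r + 2) / a - x) ^ 2 = ((r + 2) - a * x) ^ 2 / a ^ 2 := by
        field_simp
      rw [div_mul_eq_mul_div, h, div_eq_div_iff hD.ne' (by positivity : (a:ℝ) ^ 2 ≠ 0)]
      linear_combination hpoly
    rw [hkey, Real.sqrt_sq hrx]
    ring
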